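/- arXiv:2010.00156 — 4 statements merged into one kernel-verified Lean document; each statement's English description precedes it below -/
import Mathlib

section
/- (Rodrigues' rotation formula) For every nonzero x ∈ ℝ³ with θ = ‖x‖₂, the matrix exponential satisfies exp(x^∧) = I + sin(θ)·(x/θ)^∧ + (1 − cos(θ))·((x/θ)^∧)². -/
open Matrix Nat

/-- The hat map sending `x ∈ ℝ³` to the skew-symmetric matrix `x^∧`. -/
def hat (x : EuclideanSpace ℝ (Fin 3)) : Matrix (Fin 3) (Fin 3) ℝ :=
  !![0, -x 2, x 1; x 2, 0, -x 0; -x 1, x 0, 0]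

lemma cube_aux (a b c : ℝ) (h : a ^ 2 + b ^ 2 + c ^ 2 = 1) :
    (!![0, -c, b; c, 0, -a; -b, a, 0] : Matrix (Fin 3) (Fin 3) ℝ) ^ 3 =
      -!![0, -c, b; c, 0, -a; -b, a, 0] := by
  rw [pow_succ, pow_two]
  ext i j
  fin_cases i <;> fin_cases j <;>
    simp [Matrix.mul_apply, Fin.sum_univ_three]
  all_goals
    first
      | linear_combination
      | linear_combination a * h
      | linear_combination (-a) * h
      | linear_combination b * h
      | linear_combination (-b) * h
      | linear_combination c * h
      | linear_combination (-c) * h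

lemma hat_eq (u : EuclideanSpace ℝ (Fin 3)) :
    hat u = !![0, -(u 2), u 1; u 2, 0, -(u 0); -(u 1), u 0, 0] := rfl

lemma hat_smul (c : ℝ) (x : EuclideanSpace ℝ (Fin 3)) : hat (c • x) = c • hat x := by
  ext i j
  fin_cases i <;> fin_cases j <;>
    simp [hat, PiLp.smul_apply, smul_eq_mul, mul_comm]

lemma hat_cube (u : EuclideanSpace ℝ (Fin 3)) (h : u 0 ^ 2 + u 1 ^ 2 + u 2 ^ 2 = 1) :
    hat u ^ 3 = -hat u := by
  rw [hat_eq]; exact cube_aux (u 0) (u 1) (u 2) h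

lemma hat_pow_odd (u : EuclideanSpace ℝ (Fin 3)) (h : u 0 ^ 2 + u 1 ^ 2 + u 2 ^ 2 = 1)
    (k : ℕ) : hat u ^ (2 * k + 1) = ((-1 : ℝ) ^ k) • hat u := by
  induction k with
  | zero => simp
  | succ n ih =>
    have h1 : 2 * (n + 1) + 1 = (2 * n + 1) + 2 := by ring
    rw [h1, pow_add, ih, smul_mul_assoc]
    have h3 : hat u * hat u ^ 2 = -hat u := by
      rw [← hat_cube u h]
      exact (pow_succ' (hat u) 2).symm
    rw [h3, pow_succ]
    simp [smul_smul, mul_comm]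

lemma hat_pow_even (u : EuclideanSpace ℝ (Fin 3)) (h : u 0 ^ 2 + u 1 ^ 2 + u 2 ^ 2 = 1)
    (k : ℕ) : hat u ^ (2 * (k + 1)) = ((-1 : ℝ) ^ k) • hat u ^ 2 := by
  have h1 : 2 * (k + 1) = (2 * k + 1) + 1 := by ring
  rw [h1, pow_succ, hat_pow_odd u h k, smul_mul_assoc, ← pow_two]

/-- Rodrigues' rotation formula: for every nonzero `x ∈ ℝ³` with `θ = ‖x‖₂`,
`exp(x^∧) = I + sin(θ)·(x/θ)^∧ + (1 − cos(θ))·((x/θ)^∧)²`. -/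
theorem rodrigues_formula (x : EuclideanSpace ℝ (Fin 3)) (hx : x ≠ 0) :
    NormedSpace.exp (hat x) =
      1 + Real.sin ‖x‖ • hat ((‖x‖)⁻¹ • x)
        + (1 - Real.cos ‖x‖) • hat ((‖x‖)⁻¹ • x) ^ 2 := by
  set θ : ℝ := ‖x‖ with hθ
  have hθ0 : θ ≠ 0 := norm_ne_zero_iff.mpr hx
  set u : EuclideanSpace ℝ (Fin 3) := (θ⁻¹ : ℝ) • x with hu
  have hunorm : ‖u‖ = 1 := by
    rw [hu, norm_smul, norm_inv, Real.norm_eq_abs, abs_of_nonneg (norm_nonneg x), ← hθ,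
      inv_mul_cancel₀ hθ0]
  have hsum : u 0 ^ 2 + u 1 ^ 2 + u 2 ^ 2 = 1 := by
    have h1 : ‖u‖ ^ 2 = 1 := by rw [hunorm]; norm_num
    rw [EuclideanSpace.norm_eq] at h1
    rw [Real.sq_sqrt (by positivity)] at h1
    simpa [Fin.sum_univ_three, Real.norm_eq_abs, sq_abs] using h1
  set K : Matrix (Fin 3) (Fin 3) ℝ := hat u with hK
  have hhatx : hat x = θ • K := by
    rw [hK, hu, hat_smul, smul_smul, mul_inv_cancel₀ hθ0, one_smul]
  rw [hhatx, NormedSpace.exp_eq_tsum (𝕂 := ℝ)]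
  refine HasSum.tsum_eq ?_
  have key : ∀ n : ℕ, ((n ! : ℝ)⁻¹) • (θ • K) ^ n = ((θ ^ n / n !) : ℝ) • K ^ n := by
    intro n
    rw [smul_pow, smul_smul, div_eq_inv_mul]
  simp only [key]
  have heven : HasSum (fun k : ℕ => ((θ ^ (2 * k) / (2 * k)!) : ℝ) • K ^ (2 * k))
      (1 + (1 - Real.cos θ) • K ^ 2) := by
    have hscal : HasSum
        (fun k : ℕ => ((-1 : ℝ) ^ (k + 1) * θ ^ (2 * (k + 1)) / (2 * (k + 1))!))
        (Real.cos θ - 1) := by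
      have h2 := (hasSum_nat_add_iff' (f := fun n : ℕ => (-1 : ℝ) ^ n * θ ^ (2 * n) / (2 * n)!)
        1).2 (Real.hasSum_cos θ)
      simpa using h2
    have hscal' : HasSum
        (fun k : ℕ => ((-1 : ℝ) ^ k * θ ^ (2 * (k + 1)) / (2 * (k + 1))!))
        (1 - Real.cos θ) := by
      have h3 := hscal.neg
      rw [neg_sub] at h3
      have hfun : (fun k : ℕ => -((-1 : ℝ) ^ (k + 1) * θ ^ (2 * (k + 1)) / (2 * (k + 1))!))
          = fun k : ℕ => ((-1 : ℝ) ^ k * θ ^ (2 * (k + 1)) / (2 * (k + 1))!) := by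
        funext k; ring
      rwa [hfun] at h3
    have hsmul : HasSum
        (fun k : ℕ => (((-1 : ℝ) ^ k * θ ^ (2 * (k + 1)) / (2 * (k + 1))!)) • K ^ 2)
        ((1 - Real.cos θ) • K ^ 2) := hscal'.smul_const _
    have heq : ∀ k : ℕ, ((θ ^ (2 * (k + 1)) / (2 * (k + 1))!) : ℝ) • K ^ (2 * (k + 1)) =
        (((-1 : ℝ) ^ k * θ ^ (2 * (k + 1)) / (2 * (k + 1))!)) • K ^ 2 := by
      intro k
      rw [hK, hat_pow_even u hsum k, ← hK, smul_smul]
      congr 1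
      ring
    have h0 := HasSum.zero_add
      (f := fun k : ℕ => ((θ ^ (2 * k) / (2 * k)!) : ℝ) • K ^ (2 * k))
      (by
        convert hsmul using 1
        funext k
        exact heq k)
    simpa using h0
  have hodd : HasSum (fun k : ℕ => ((θ ^ (2 * k + 1) / (2 * k + 1)!) : ℝ) • K ^ (2 * k + 1))
      (Real.sin θ • K) := by
    have hsmul : HasSum
        (fun k : ℕ => (((-1 : ℝ) ^ k * θ ^ (2 * k + 1) / (2 * k + 1)!)) • K)
        (Real.sin θ • K) := (Real.hasSum_sin θ).smul_const _
    convert hsmul using 1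
    funext k
    rw [hK, hat_pow_odd u hsum k, ← hK, smul_smul]
    congr 1
    ring
  have htot := HasSum.even_add_odd (f := fun n : ℕ => ((θ ^ n / n !) : ℝ) • K ^ n) heven hodd
  have hval : (1 : Matrix (Fin 3) (Fin 3) ℝ) + Real.sin θ • K + (1 - Real.cos θ) • K ^ 2
      = 1 + (1 - Real.cos θ) • K ^ 2 + Real.sin θ • K := by abel
  rw [hval]
  exact htot
end

section
/- For every R ∈ SO(3) with θ(R) ∈ (0, π), the exponential map inverts the logarithmic map: exp(Log(R)) = R. -/
open Matrix Real

/-- `SO(3)`: real 3×3 matrices `R` with `RᵀR = I` and `det R = 1`. -/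
def SO3 (R : Matrix (Fin 3) (Fin 3) ℝ) : Prop :=
  Rᵀ * R = 1 ∧ R.det = 1

/-- The rotation angle `θ(R) = arccos((tr(R) − 1)/2)`. -/
noncomputable def rotAngle (R : Matrix (Fin 3) (Fin 3) ℝ) : ℝ :=
  Real.arccos ((Matrix.trace R - 1) / 2)

/-- The matrix logarithm `Log(R) = (θ/(2 sin θ))(R − Rᵀ)` for `θ ≠ 0`, and `0` for `θ = 0`. -/
noncomputable def matLog (R : Matrix (Fin 3) (Fin 3) ℝ) : Matrix (Fin 3) (Fin 3) ℝ :=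
  if rotAngle R = 0 then 0
  else (rotAngle R / (2 * Real.sin (rotAngle R))) • (R - Rᵀ)

open Polynomial
open scoped Nat

attribute [local instance] Matrix.linftyOpSemiNormedRing Matrix.linftyOpNormedRing
  Matrix.linftyOpNormedAlgebra

lemma exp_of_cube (θ : ℝ) (hθ : 0 < θ) (W : Matrix (Fin 3) (Fin 3) ℝ)
    (hW : W ^ 3 = (-(θ ^ 2)) • W) :
    NormedSpace.exp W = 1 + (Real.sin θ / θ) • W + ((1 - Real.cos θ) / θ ^ 2) • (W * W) := by
  have hθ0 : θ ≠ 0 := ne_of_gt hθ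
  have hodd : ∀ k : ℕ, W ^ (2 * k + 1) = ((-(θ ^ 2)) ^ k) • W := by
    intro k
    induction k with
    | zero => simp
    | succ n ih =>
      have h2 : 2 * (n + 1) + 1 = (2 * n + 1) + 1 + 1 := by ring
      rw [h2, pow_succ, pow_succ, ih, smul_mul_assoc, smul_mul_assoc, ← pow_three', hW,
        smul_smul, ← pow_succ]
  have heven : ∀ k : ℕ, W ^ (2 * k + 2) = ((-(θ ^ 2)) ^ k) • (W * W) := by
    intro k
    have : 2 * k + 2 = (2 * k + 1) + 1 := rfl
    rw [this, pow_succ, hodd, smul_mul_assoc]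
  -- the three sums
  have hsin : HasSum (fun k : ℕ => (((2 * k + 1)! : ℝ)⁻¹ • W ^ (2 * k + 1)))
      ((Real.sin θ / θ) • W) := by
    have h0 := Real.hasSum_sin θ
    have h1 : HasSum (fun k : ℕ => ((-1 : ℝ) ^ k * θ ^ (2 * k + 1) / (2 * k + 1)!) * θ⁻¹)
        (Real.sin θ * θ⁻¹) := h0.mul_right _
    have h2 : HasSum (fun k : ℕ => ((-1 : ℝ) ^ k * θ ^ (2 * k) / (2 * k + 1)!))
        (Real.sin θ / θ) := by
      rw [div_eq_mul_inv]
      convert h1 using 2 with k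
      field_simp
      ring
    have := h2.smul_const W
    convert this using 2 with k
    rw [hodd k, smul_smul]
    congr 1
    rw [neg_pow, ← pow_mul]
    field_simp
  have hcos : HasSum (fun k : ℕ => (((2 * k + 2)! : ℝ)⁻¹ • W ^ (2 * k + 2)))
      (((1 - Real.cos θ) / θ ^ 2) • (W * W)) := by
    have h0 := Real.hasSum_cos θ
    have h1 : HasSum (fun k : ℕ => ((-1 : ℝ) ^ (k + 1) * θ ^ (2 * (k + 1)) / (2 * (k + 1))!))
        (Real.cos θ - ∑ i ∈ Finset.range 1, ((-1 : ℝ) ^ i * θ ^ (2 * i) / (2 * i)!)) := by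
      exact (hasSum_nat_add_iff' 1).mpr h0
    simp only [Finset.range_one, Finset.sum_singleton, pow_zero, mul_zero, Nat.factorial_zero,
      Finset.sum_range_one] at h1
    have h2 : HasSum (fun k : ℕ => ((-1 : ℝ) ^ k * θ ^ (2 * k) / (2 * k + 2)!))
        ((1 - Real.cos θ) / θ ^ 2) := by
      have h3 := (h1.neg).mul_right (θ ^ 2)⁻¹
      rw [div_eq_mul_inv]
      convert h3 using 2 with k
      · rfl
      · have : 2 * (k + 1) = 2 * k + 2 := by ring
        rw [this]
        field_simp
        ring
      · simp
    have := h2.smul_const (W * W)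
    convert this using 2 with k
    rw [heven k, smul_smul]
    congr 1
    rw [neg_pow, ← pow_mul]
    field_simp
  have hshift : HasSum (fun n : ℕ => ((n + 1)! : ℝ)⁻¹ • W ^ (n + 1))
      ((Real.sin θ / θ) • W + ((1 - Real.cos θ) / θ ^ 2) • (W * W)) := by
    exact HasSum.even_add_odd hsin hcos
  have hfull : HasSum (fun n : ℕ => ((n)! : ℝ)⁻¹ • W ^ n)
      (1 + ((Real.sin θ / θ) • W + ((1 - Real.cos θ) / θ ^ 2) • (W * W))) := by
    have := HasSum.zero_add (f := fun n : ℕ => ((n)! : ℝ)⁻¹ • W ^ n) hshift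
    simpa using this
  rw [NormedSpace.exp_eq_tsum (𝕂 := ℝ)]
  simp only []
  rw [hfull.tsum_eq, add_assoc]

lemma CH3 (M : Matrix (Fin 3) (Fin 3) ℝ) :
    M ^ 3 - (Matrix.trace M) • (M ^ 2) + (Matrix.trace (Matrix.adjugate M)) • M
      - (M.det) • 1 = 0 := by
  have hadj := Matrix.adjugate_fin_three M
  ext i j
  fin_cases i <;> fin_cases j <;>
    simp [pow_succ, Matrix.mul_apply, Fin.sum_univ_succ, Matrix.trace, Matrix.diag,
      Matrix.det_fin_three, hadj] <;> ring


/-- For every `R ∈ SO(3)` with `θ(R) ∈ (0, π)`, `exp(Log(R)) = R`. -/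
theorem exp_matLog (R : Matrix (Fin 3) (Fin 3) ℝ) (hR : SO3 R)
    (hθ : rotAngle R ∈ Set.Ioo 0 π) :
    NormedSpace.exp (matLog R) = R := by
  obtain ⟨horth, hdet⟩ := hR
  set t : ℝ := Matrix.trace R with ht
  set θ : ℝ := rotAngle R with hθdef
  obtain ⟨hθ0, hθπ⟩ := hθ
  have hθne : θ ≠ 0 := ne_of_gt hθ0
  -- cos θ = (t-1)/2
  have hx1 : (t - 1) / 2 < 1 := by
    by_contra h
    push_neg at h
    have : θ = 0 := Real.arccos_eq_zero.mpr h
    exact hθne this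
  have hx2 : -1 < (t - 1) / 2 := by
    by_contra h
    push_neg at h
    have : θ = π := Real.arccos_eq_pi.mpr h
    exact absurd this (ne_of_lt hθπ)
  have hc : Real.cos θ = (t - 1) / 2 := Real.cos_arccos (le_of_lt hx2) (le_of_lt hx1)
  have hs : 0 < Real.sin θ := Real.sin_pos_of_pos_of_lt_pi hθ0 hθπ
  set c : ℝ := Real.cos θ with hcdef
  set s : ℝ := Real.sin θ with hsdef
  have hsne : s ≠ 0 := ne_of_gt hs
  have hssq : s ^ 2 = 1 - c ^ 2 := Real.sin_sq θ
  have htc : t = 2 * c + 1 := by rw [hc]; ring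
  have hc1 : -1 < c := by rw [hc]; exact hx2
  have hc2 : c < 1 := by rw [hc]; exact hx1
  have h1t : 1 + t ≠ 0 := by rw [htc]; nlinarith
  have hne : 2 * (1 + t) ≠ 0 := by
    simp only [mul_ne_zero_iff]; exact ⟨two_ne_zero, h1t⟩
  -- orthogonality facts
  have horth' : R * Rᵀ = 1 := mul_eq_one_comm.mp horth
  -- adjugate R = Rᵀ
  have hadj : Matrix.adjugate R = Rᵀ := by
    calc Matrix.adjugate R = (Rᵀ * R) * Matrix.adjugate R := by rw [horth, one_mul]
    _ = Rᵀ * (R * Matrix.adjugate R) := by rw [mul_assoc]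
    _ = Rᵀ * ((1 : ℝ) • 1) := by rw [Matrix.mul_adjugate, hdet]
    _ = Rᵀ := by rw [one_smul, mul_one]
  have htradj : Matrix.trace (Matrix.adjugate R) = t := by
    rw [hadj, Matrix.trace_transpose]
  -- Cayley-Hamilton
  have hCH : R ^ 3 - t • R ^ 2 + t • R - 1 = 0 := by
    have := CH3 R
    rw [htradj, hdet, one_smul, ← ht] at this
    exact this
  -- polynomial machinery
  set P : Polynomial ℝ := X ^ 3 - C t * X ^ 2 + C t * X - 1 with hP
  have haevalP : Polynomial.aeval R P = 0 := by
    rw [hP]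
    simp only [_root_.map_sub, _root_.map_add, _root_.map_mul, _root_.map_pow, Polynomial.aeval_X, Polynomial.aeval_C,
      _root_.map_one]
    rw [← Algebra.smul_def, ← Algebra.smul_def]
    exact hCH
  set b : Polynomial ℝ := X - (X ^ 2 - C t * X + C t) with hb
  set B : Matrix (Fin 3) (Fin 3) ℝ := R - Rᵀ with hB
  -- Rᵀ = R² - t R + t
  have hmulτ : R * Polynomial.aeval R (X ^ 2 - C t * X + C t) = 1 := by
    have hid : (X : Polynomial ℝ) * (X ^ 2 - C t * X + C t) = P + 1 := by rw [hP]; ring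
    calc R * Polynomial.aeval R (X ^ 2 - C t * X + C t)
        = Polynomial.aeval R ((X : Polynomial ℝ) * (X ^ 2 - C t * X + C t)) := by
          rw [_root_.map_mul, Polynomial.aeval_X]
    _ = Polynomial.aeval R (P + 1) := by rw [hid]
    _ = 1 := by rw [_root_.map_add, haevalP, _root_.map_one, zero_add]
  have hT : Rᵀ = Polynomial.aeval R (X ^ 2 - C t * X + C t) := by
    calc Rᵀ = Rᵀ * (R * Polynomial.aeval R (X ^ 2 - C t * X + C t)) := by
          rw [hmulτ, mul_one]
    _ = (Rᵀ * R) * Polynomial.aeval R (X ^ 2 - C t * X + C t) := by rw [mul_assoc]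
    _ = Polynomial.aeval R (X ^ 2 - C t * X + C t) := by rw [horth, one_mul]
  have haevalb : Polynomial.aeval R b = B := by
    rw [hb, hB, _root_.map_sub, Polynomial.aeval_X, hT]
  -- key cubic identity for B
  have hid1 : b ^ 3 + ((3 - t) * (1 + t)) • b
      = P * (-(X - C t) * (X ^ 2 - (C t + 3) * X + (2 * C t + 3))) := by
    rw [hb, hP, Polynomial.smul_eq_C_mul]
    simp only [_root_.map_mul, _root_.map_sub, _root_.map_add, _root_.map_one, map_ofNat]
    ring
  have hB3 : B ^ 3 + ((3 - t) * (1 + t)) • B = 0 := by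
    have h := congrArg (Polynomial.aeval R) hid1
    simpa only [_root_.map_add, _root_.map_smul, _root_.map_pow, haevalb, haevalP,
      zero_mul, _root_.map_mul] using h
  -- Rodrigues identity
  have hid2 : b ^ 2 + (1 + t) • b + (2 * (1 + t)) • ((1 : Polynomial ℝ) - X)
      = P * (X - (C t + 2)) := by
    rw [hb, hP, Polynomial.smul_eq_C_mul, Polynomial.smul_eq_C_mul]
    simp only [_root_.map_mul, _root_.map_sub, _root_.map_add, _root_.map_one, map_ofNat]
    ring
  have key2 : B ^ 2 + (1 + t) • B + (2 * (1 + t)) • ((1 : Matrix (Fin 3) (Fin 3) ℝ) - R)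
      = 0 := by
    have h := congrArg (Polynomial.aeval R) hid2
    simpa only [_root_.map_add, _root_.map_smul, _root_.map_pow, _root_.map_sub, _root_.map_one,
      Polynomial.aeval_X, haevalb, haevalP, zero_mul, _root_.map_mul] using h
  -- the log
  have hlog : matLog R = (θ / (2 * s)) • B := by
    rw [matLog, if_neg hθne]
  have hW3 : ((θ / (2 * s)) • B) ^ 3 = (-(θ ^ 2)) • ((θ / (2 * s)) • B) := by
    rw [_root_.smul_pow, smul_smul]
    have hB3' : B ^ 3 = (-((3 - t) * (1 + t))) • B := by
      rw [neg_smul, ← sub_eq_zero, sub_neg_eq_add]; exact hB3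
    rw [hB3', smul_smul]
    congr 1
    have h4s : (3 - t) * (1 + t) = 4 * s ^ 2 := by rw [htc, hssq]; ring
    rw [h4s]
    field_simp
    ring
  rw [hlog, exp_of_cube θ hθ0 _ hW3]
  -- final Rodrigues assembly
  have hWW : ((θ / (2 * s)) • B) * ((θ / (2 * s)) • B) = ((θ / (2 * s)) * (θ / (2 * s))) • B ^ 2 := by
    rw [smul_mul_assoc, mul_smul_comm, smul_smul, pow_two]
  rw [hWW, smul_smul, smul_smul]
  have hcoef1 : s / θ * (θ / (2 * s)) = 1 / 2 := by field_simp
  have hcoef2 : (1 - c) / θ ^ 2 * (θ / (2 * s) * (θ / (2 * s))) = (2 * (1 + t))⁻¹ := by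
    have h4s : s ^ 2 = (1 - c) * (1 + c) := by rw [hssq]; ring
    have h1c : (1 : ℝ) + c ≠ 0 := by nlinarith
    have h1mc : (1 : ℝ) - c ≠ 0 := by nlinarith
    have hq : θ / (2 * s) * (θ / (2 * s)) = θ ^ 2 / (4 * s ^ 2) := by
      field_simp; ring
    rw [hq, h4s, htc]
    have h2 : (2:ℝ) * (1 + (2 * c + 1)) = 4 * (1 + c) := by ring
    have hd1 : θ ^ 2 * (4 * ((1 - c) * (1 + c))) ≠ 0 :=
      mul_ne_zero (pow_ne_zero _ hθne)
        (mul_ne_zero four_ne_zero (mul_ne_zero h1mc h1c))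
    have hd2 : (4:ℝ) * (1 + c) ≠ 0 := mul_ne_zero four_ne_zero h1c
    rw [h2, inv_eq_one_div, div_mul_div_comm, div_eq_div_iff hd1 hd2]
    ring
  rw [hcoef1, hcoef2]
  -- from key2 : B² + (1+t)•B + 2(1+t)•(1-R) = 0
  have final : (2 * (1 + t)) • ((1 : Matrix (Fin 3) (Fin 3) ℝ) + (1 / 2 : ℝ) • B
      + (2 * (1 + t) : ℝ)⁻¹ • B ^ 2) = (2 * (1 + t)) • R := by
    rw [smul_add, smul_add, smul_smul, smul_smul, mul_inv_cancel₀ hne, one_smul]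
    linear_combination (norm := module) key2
  have := smul_right_injective (Matrix (Fin 3) (Fin 3) ℝ) hne final
  exact this
end

section
/- (Distributed pairwise-consistency initialization for rotations) Let A, B ∈ SO(3) with θ(Aᵀ Bᵀ) < π, and define the averaged measurements A' := A · exp((1/2) Log(Aᵀ Bᵀ)) and B' := B · exp((1/2) Log(Bᵀ Aᵀ)). Then A' B' = I; that is, the averaged pair of relative rotation measurements is pairwise consistent. -/
open Matrix Real

namespace PairwiseInitAux

lemma adjugate_eq (R : Matrix (Fin 3) (Fin 3) ℝ) :
    Matrix.adjugate R =
      R * R - (Matrix.trace R) • R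
        + (Matrix.trace (Matrix.adjugate R)) • (1 : Matrix (Fin 3) (Fin 3) ℝ) := by
  ext i j
  fin_cases i <;> fin_cases j <;>
    simp [Matrix.adjugate_fin_three, Matrix.trace_fin_three, Matrix.mul_apply,
      Fin.sum_univ_three, Matrix.one_apply] <;> ring

lemma so3_quad {R : Matrix (Fin 3) (Fin 3) ℝ} (h1 : Rᵀ * R = 1) (hd : R.det = 1) :
    R * R = (Matrix.trace R) • R - (Matrix.trace R) • (1 : Matrix (Fin 3) (Fin 3) ℝ) + Rᵀ := by
  have h2 : R * Rᵀ = 1 := mul_eq_one_comm.mp h1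
  have hadj : Matrix.adjugate R = Rᵀ := by
    calc Matrix.adjugate R = Matrix.adjugate R * (R * Rᵀ) := by rw [h2, mul_one]
    _ = (Matrix.adjugate R * R) * Rᵀ := by rw [mul_assoc]
    _ = Rᵀ := by rw [Matrix.adjugate_mul, hd, one_smul, one_mul]
  have h3 := adjugate_eq R
  rw [hadj, Matrix.trace_transpose] at h3
  rw [h3]; abel

lemma col_norm {R : Matrix (Fin 3) (Fin 3) ℝ} (h1 : Rᵀ * R = 1) (j : Fin 3) :
    R 0 j ^ 2 + R 1 j ^ 2 + R 2 j ^ 2 = 1 := by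
  have := congrFun (congrFun h1 j) j
  simpa [Matrix.mul_apply, Fin.sum_univ_three, Matrix.one_apply, sq] using this

lemma trace_le_three {R : Matrix (Fin 3) (Fin 3) ℝ} (h1 : Rᵀ * R = 1) :
    Matrix.trace R ≤ 3 := by
  have a0 : R 0 0 ≤ 1 := by
    nlinarith [col_norm h1 0, sq_nonneg (R 0 0 - 1), sq_nonneg (R 1 0), sq_nonneg (R 2 0)]
  have a1 : R 1 1 ≤ 1 := by
    nlinarith [col_norm h1 1, sq_nonneg (R 1 1 - 1), sq_nonneg (R 0 1), sq_nonneg (R 2 1)]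
  have a2 : R 2 2 ≤ 1 := by
    nlinarith [col_norm h1 2, sq_nonneg (R 2 2 - 1), sq_nonneg (R 0 2), sq_nonneg (R 1 2)]
  rw [Matrix.trace_fin_three]
  linarith

set_option maxHeartbeats 1000000 in
lemma eq_one_of_trace_eq_three {R : Matrix (Fin 3) (Fin 3) ℝ} (h1 : Rᵀ * R = 1)
    (ht : Matrix.trace R = 3) : R = 1 := by
  have e0 := col_norm h1 0
  have e1 := col_norm h1 1
  have e2 := col_norm h1 2
  have a0 : R 0 0 ≤ 1 := by
    nlinarith [sq_nonneg (R 0 0 - 1), sq_nonneg (R 1 0), sq_nonneg (R 2 0)]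
  have a1 : R 1 1 ≤ 1 := by
    nlinarith [sq_nonneg (R 1 1 - 1), sq_nonneg (R 0 1), sq_nonneg (R 2 1)]
  have a2 : R 2 2 ≤ 1 := by
    nlinarith [sq_nonneg (R 2 2 - 1), sq_nonneg (R 0 2), sq_nonneg (R 1 2)]
  rw [Matrix.trace_fin_three] at ht
  have h00 : R 0 0 = 1 := by linarith
  have h11 : R 1 1 = 1 := by linarith
  have h22 : R 2 2 = 1 := by linarith
  ext i j
  fin_cases i <;> fin_cases j <;>
    simp only [Fin.zero_eta, Fin.mk_one, Fin.reduceFinMk, Matrix.one_apply, Fin.isValue] <;>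
    simp (config := { decide := true }) only [Fin.reduceEq, if_true, if_false, reduceIte] <;>
    nlinarith [sq_nonneg (R 0 1), sq_nonneg (R 0 2), sq_nonneg (R 1 0),
      sq_nonneg (R 1 2), sq_nonneg (R 2 0), sq_nonneg (R 2 1)]

lemma pow_odd {K : Matrix (Fin 3) (Fin 3) ℝ} (hK : K * K * K = -K) (n : ℕ) :
    K ^ (2 * n + 1) = ((-1 : ℝ) ^ n) • K := by
  induction n with
  | zero => simp
  | succ n ih =>
    have h : 2 * (n + 1) + 1 = (2 * n + 1) + 2 := by ring
    rw [h, pow_add, ih, sq, smul_mul_assoc, ← mul_assoc, hK, pow_succ]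
    module

lemma pow_even {K : Matrix (Fin 3) (Fin 3) ℝ} (hK : K * K * K = -K) (n : ℕ) :
    K ^ (2 * n + 2) = ((-1 : ℝ) ^ n) • (K * K) := by
  have h : 2 * n + 2 = (2 * n + 1) + 1 := by ring
  rw [h, pow_succ, pow_odd hK, smul_mul_assoc]

/-- Rodrigues' formula for the matrix exponential of `θ • K` with `K³ = -K`. -/
lemma exp_rodrigues {K : Matrix (Fin 3) (Fin 3) ℝ} (θ : ℝ) (hK : K * K * K = -K) :
    NormedSpace.exp (θ • K) =
      1 + Real.sin θ • K + (1 - Real.cos θ) • (K * K) := by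
  have heven : HasSum (fun n : ℕ => ((((2 * n).factorial : ℝ))⁻¹ • (θ • K) ^ (2 * n)))
      (1 + (1 - Real.cos θ) • (K * K)) := by
    have hc := Real.hasSum_cos θ
    have hc' : HasSum (fun n : ℕ => (-1 : ℝ) ^ n * θ ^ (2 * n) / (2 * n).factorial)
        ((Real.cos θ - 1)
          + ∑ i ∈ Finset.range 1, (-1 : ℝ) ^ i * θ ^ (2 * i) / (2 * i).factorial) := by
      simpa using hc
    have hshift := (hasSum_nat_add_iff 1).mpr hc'
    have hs2 := (hshift.neg).smul_const (K * K)
    have hmain : HasSum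
        (fun n : ℕ => (((2 * (n + 1)).factorial : ℝ))⁻¹ • (θ • K) ^ (2 * (n + 1)))
        ((1 - Real.cos θ) • (K * K)) := by
      convert hs2 using 1
      · funext n
        rw [smul_pow]
        have h2 : 2 * (n + 1) = 2 * n + 2 := by ring
        rw [h2, pow_even hK n, smul_smul, smul_smul]
        congr 1
        field_simp
        ring
      · rw [neg_sub]
    have h4 := (hasSum_nat_add_iff
      (f := fun n : ℕ => (((2 * n).factorial : ℝ))⁻¹ • (θ • K) ^ (2 * n)) 1).mp hmain
    have h5 : ∑ i ∈ Finset.range 1,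
        (((2 * i).factorial : ℝ))⁻¹ • (θ • K) ^ (2 * i) = (1 : Matrix (Fin 3) (Fin 3) ℝ) := by
      simp
    rw [h5] at h4
    simpa [add_comm] using h4
  have hodd : HasSum (fun n : ℕ => ((((2 * n + 1).factorial : ℝ))⁻¹ • (θ • K) ^ (2 * n + 1)))
      (Real.sin θ • K) := by
    have hs := (Real.hasSum_sin θ).smul_const K
    convert hs using 1
    funext n
    rw [smul_pow, pow_odd hK n, smul_smul, smul_smul]
    congr 1
    field_simp
  have htotal : HasSum (fun n : ℕ => ((n.factorial : ℝ))⁻¹ • (θ • K) ^ n)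
      ((1 + (1 - Real.cos θ) • (K * K)) + Real.sin θ • K) :=
    HasSum.even_add_odd heven hodd
  calc NormedSpace.exp (θ • K)
      = ∑' n : ℕ, ((n.factorial : ℝ))⁻¹ • (θ • K) ^ n := by rw [NormedSpace.exp_eq_tsum (𝕂 := ℝ)]
    _ = (1 + (1 - Real.cos θ) • (K * K)) + Real.sin θ • K := htotal.tsum_eq
    _ = 1 + Real.sin θ • K + (1 - Real.cos θ) • (K * K) := by abel

end PairwiseInitAux

open PairwiseInitAux in
set_option maxHeartbeats 1000000 in
/-- (Distributed pairwise-consistency initialization for rotations.) For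
`A, B ∈ SO(3)` with `θ(Aᵀ Bᵀ) < π`, the averaged measurements
`A' = A·exp((1/2) Log(Aᵀ Bᵀ))` and `B' = B·exp((1/2) Log(Bᵀ Aᵀ))` satisfy `A' B' = I`. -/
theorem pairwise_initialization (A B : Matrix (Fin 3) (Fin 3) ℝ)
    (hA : SO3 A) (hB : SO3 B) (hθ : rotAngle (Aᵀ * Bᵀ) < π) :
    (A * NormedSpace.exp ((1 / 2 : ℝ) • matLog (Aᵀ * Bᵀ))) *
      (B * NormedSpace.exp ((1 / 2 : ℝ) • matLog (Bᵀ * Aᵀ))) = 1 := by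
  obtain ⟨hA1, hA2⟩ := hA
  obtain ⟨hB1, hB2⟩ := hB
  have hA1' : A * Aᵀ = 1 := mul_eq_one_comm.mp hA1
  have hB1' : B * Bᵀ = 1 := mul_eq_one_comm.mp hB1
  set C : Matrix (Fin 3) (Fin 3) ℝ := Aᵀ * Bᵀ with hC
  have hCt : Cᵀ = B * A := by
    rw [hC, Matrix.transpose_mul, Matrix.transpose_transpose, Matrix.transpose_transpose]
  have hC1 : Cᵀ * C = 1 := by
    rw [hCt, hC, mul_assoc, ← mul_assoc A Aᵀ Bᵀ, hA1', one_mul, hB1']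
  have hCdet : C.det = 1 := by
    rw [hC, Matrix.det_mul, Matrix.det_transpose, Matrix.det_transpose, hA2, hB2, mul_one]
  have hC1' : C * Cᵀ = 1 := mul_eq_one_comm.mp hC1
  set t : ℝ := Matrix.trace C with ht
  have htle : t ≤ 3 := trace_le_three hC1
  have hlb : -1 < (t - 1) / 2 := by
    by_contra h
    push_neg at h
    have hpi : rotAngle C = π := Real.arccos_eq_pi.mpr (by linarith)
    rw [hpi] at hθ
    exact lt_irrefl _ hθ
  have hangle : rotAngle (Bᵀ * Aᵀ) = rotAngle C := by
    unfold rotAngle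
    rw [Matrix.trace_mul_comm]
  by_cases hzero : rotAngle C = 0
  · -- θ = 0 : C = 1 and both logs vanish
    have hz2 : rotAngle (Bᵀ * Aᵀ) = 0 := hangle.trans hzero
    have h3 : (1 : ℝ) ≤ (t - 1) / 2 := Real.arccos_eq_zero.mp hzero
    have hteq : t = 3 := by linarith
    have hCone : C = 1 := eq_one_of_trace_eq_three hC1 hteq
    have hBA : B * A = 1 := by rw [← hCt, hCone, Matrix.transpose_one]
    have hAB : A * B = 1 := mul_eq_one_comm.mp hBA
    simp only [matLog, if_pos hzero, if_pos hz2, smul_zero, NormedSpace.exp_zero, mul_one]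
    exact hAB
  · have hθpos : 0 < rotAngle C := lt_of_le_of_ne (Real.arccos_nonneg _) (Ne.symm hzero)
    set θ : ℝ := rotAngle C with hθdef
    have hsin : 0 < Real.sin θ := Real.sin_pos_of_pos_of_lt_pi hθpos hθ
    have hcos : Real.cos θ = (t - 1) / 2 := Real.cos_arccos (by linarith) (by linarith)
    set s : ℝ := Real.sin θ with hs
    set c : ℝ := Real.cos θ with hcdef
    have hsne : s ≠ 0 := ne_of_gt hsin
    have hsc : s ^ 2 = 1 - c ^ 2 := by
      have hh := Real.sin_sq_add_cos_sq θ
      rw [← hs, ← hcdef] at hh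
      linarith
    set S : Matrix (Fin 3) (Fin 3) ℝ := C - Cᵀ with hS
    have hq : C * C = t • C - t • (1 : Matrix (Fin 3) (Fin 3) ℝ) + Cᵀ := so3_quad hC1 hCdet
    have hqT : Cᵀ * Cᵀ = t • Cᵀ - t • (1 : Matrix (Fin 3) (Fin 3) ℝ) + C := by
      have h := so3_quad (R := Cᵀ) (by rw [Matrix.transpose_transpose]; exact hC1')
        (by rw [Matrix.det_transpose]; exact hCdet)
      rw [Matrix.trace_transpose, Matrix.transpose_transpose] at h
      exact h
    have hSS : S * S = (t + 1) • (C + Cᵀ) - (2 * t + 2) • (1 : Matrix (Fin 3) (Fin 3) ℝ) := by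
      rw [hS, sub_mul, mul_sub, mul_sub, hq, hqT, hC1, hC1']
      module
    have hSSS : S * S * S = (t * t - 2 * t - 3) • S := by
      rw [hSS, sub_mul, smul_mul_assoc, smul_mul_assoc, add_mul, one_mul, hS, mul_sub, mul_sub,
        hq, hqT, hC1, hC1']
      module
    set K : Matrix (Fin 3) (Fin 3) ℝ := (2 * s)⁻¹ • S with hK
    have hcoef : t * t - 2 * t - 3 = -(4 * s ^ 2) := by
      rw [hsc, hcos]
      ring
    have e1 : K * K = ((2 * s)⁻¹ * (2 * s)⁻¹) • (S * S) := by
      rw [hK, smul_mul_smul_comm]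
    have e2 : K * K * K = (((2 * s)⁻¹ * (2 * s)⁻¹) * (2 * s)⁻¹) • (S * S * S) := by
      rw [e1, hK, smul_mul_smul_comm]
    have hK3 : K * K * K = -K := by
      rw [e2, hSSS, smul_smul, hcoef, hK, ← neg_smul]
      congr 1
      field_simp
      ring
    have hlogC : matLog C = θ • K := by
      simp only [matLog]
      rw [if_neg hzero, hK, smul_smul, div_eq_mul_inv]
    have hexpC : NormedSpace.exp (matLog C) = C := by
      rw [hlogC, exp_rodrigues θ hK3, ← hcdef, ← hs, hK, e1, hSS]
      rw [hS]
      match_scalars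
      · field_simp
        linear_combination 2 * hsc + 2 * (1 - c) * hcos
      · field_simp
        linear_combination (-2) * hsc + (-2 * (1 - c)) * hcos
      · field_simp
        linear_combination (-2) * hsc + (-2 * (1 - c)) * hcos
    have hBtu : IsUnit Bᵀ := by
      rw [Matrix.isUnit_iff_isUnit_det, Matrix.det_transpose, hB2]
      exact isUnit_one
    have hBinv : Bᵀ⁻¹ = B := Matrix.inv_eq_right_inv hB1
    have p1 : Bᵀ * C * B = Bᵀ * Aᵀ := by
      rw [hC, ← mul_assoc Bᵀ Aᵀ Bᵀ, mul_assoc (Bᵀ * Aᵀ) Bᵀ B, hB1, mul_one]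
    have p2 : Bᵀ * Cᵀ * B = A * B := by
      rw [hCt, ← mul_assoc Bᵀ B A, hB1, one_mul]
    have hlogBA : matLog (Bᵀ * Aᵀ) = Bᵀ * matLog C * B := by
      simp only [matLog]
      rw [hangle, if_neg hzero, if_neg hzero]
      rw [Matrix.transpose_mul, Matrix.transpose_transpose, Matrix.transpose_transpose]
      rw [Matrix.mul_smul, Matrix.smul_mul]
      congr 1
      rw [mul_sub Bᵀ C Cᵀ, sub_mul, p1, p2]
    have hhalf : (1 / 2 : ℝ) • matLog (Bᵀ * Aᵀ) = Bᵀ * ((1 / 2 : ℝ) • matLog C) * B := by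
      rw [hlogBA, Matrix.mul_smul, Matrix.smul_mul]
    have hconj : NormedSpace.exp ((1 / 2 : ℝ) • matLog (Bᵀ * Aᵀ))
        = Bᵀ * NormedSpace.exp ((1 / 2 : ℝ) • matLog C) * B := by
      rw [hhalf]
      have h := Matrix.exp_conj Bᵀ ((1 / 2 : ℝ) • matLog C) hBtu
      rw [hBinv] at h
      exact h
    set E : Matrix (Fin 3) (Fin 3) ℝ := NormedSpace.exp ((1 / 2 : ℝ) • matLog C) with hE
    have hEE : E * E = C := by
      have h6 := Matrix.exp_add_of_commute ((1 / 2 : ℝ) • matLog C) ((1 / 2 : ℝ) • matLog C)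
        (Commute.refl _)
      have hadd : (1 / 2 : ℝ) • matLog C + (1 / 2 : ℝ) • matLog C = matLog C := by module
      rw [hadd] at h6
      rw [hE, ← h6, hexpC]
    rw [hconj]
    rw [show B * (Bᵀ * E * B) = E * B by rw [← mul_assoc, ← mul_assoc, hB1', one_mul]]
    rw [mul_assoc A E (E * B), ← mul_assoc E E B, hEE, hC, mul_assoc Aᵀ Bᵀ B, hB1, mul_one,
      hA1']
end

section
/- (Convergence of the coupled translation estimation) Let G be a connected simple graph on a finite nonempty vertex set V. Let δ : [0,∞) → (V → ℝ³) be continuous with Σ_{i∈V} δ_i(s) = 0 for all s ≥ 0 (minimal consistency) and δ(s) → δ_∞ as s → ∞ for some δ_∞ : V → ℝ³. Suppose t : [0,∞) → (V → ℝ³) satisfies, for every i ∈ V and every s ≥ 0, the translation dynamics: t_i has derivative Σ_{j: j adjacent to i} (t_j(s) − t_i(s)) − δ_i(s) at s. Then there exists t_eq : V → ℝ³ such that t(s) → t_eq as s → ∞, and t_eq is an equilibrium: Σ_{j: j adjacent to i} (t_eq(j) − t_eq(i)) = δ_∞(i) for every i ∈ V. -/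
open Filter
open scoped RealInnerProductSpace

set_option linter.unusedSectionVars false

section helpers
variable {V : Type*} [Fintype V] [Nonempty V] (G : SimpleGraph V) [DecidableRel G.Adj]

local notation "F" => EuclideanSpace ℝ (Fin 3)


lemma nbr_swap {M : Type*} [AddCommMonoid M] (f : V → V → M) :
    ∑ i, ∑ j ∈ G.neighborFinset i, f i j = ∑ i, ∑ j ∈ G.neighborFinset i, f j i := by
  have h : ∀ g : V → V → M,
      ∑ i, ∑ j ∈ G.neighborFinset i, g i j
        = ∑ i, ∑ j, if G.Adj i j then g i j else 0 := by
    intro g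
    refine Finset.sum_congr rfl fun i _ => ?_
    rw [SimpleGraph.neighborFinset_eq_filter, Finset.sum_filter]
  rw [h, h, Finset.sum_comm]
  refine Finset.sum_congr rfl fun i _ => Finset.sum_congr rfl fun j _ => ?_
  exact if_congr (G.adj_comm j i) rfl rfl

lemma nbr_sum_zero (f : V → F) :
    ∑ i, ∑ j ∈ G.neighborFinset i, (f j - f i) = 0 := by
  have h1 : ∑ i, ∑ j ∈ G.neighborFinset i, (f j - f i)
      = (∑ i, ∑ j ∈ G.neighborFinset i, f j) - (∑ i, ∑ j ∈ G.neighborFinset i, f i) := by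
    rw [← Finset.sum_sub_distrib]
    exact Finset.sum_congr rfl fun i _ => by rw [← Finset.sum_sub_distrib]
  rw [h1, nbr_swap G (fun i j => f j), sub_self]

/-- Dirichlet energy. -/
noncomputable def gEnergy (z : V → F) : ℝ := ∑ i, ∑ j ∈ G.neighborFinset i, ⟪z i, z i - z j⟫

lemma gEnergy_eq (z : V → F) :
    (2:ℝ) * gEnergy G z = ∑ i, ∑ j ∈ G.neighborFinset i, ⟪z i - z j, z i - z j⟫ := by
  have hswap : gEnergy G z = ∑ i, ∑ j ∈ G.neighborFinset i, ⟪z j, z j - z i⟫ :=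
    nbr_swap G (fun i j => ⟪z i, z i - z j⟫)
  have : (2:ℝ) * gEnergy G z
      = ∑ i, ∑ j ∈ G.neighborFinset i, (⟪z i, z i - z j⟫ + ⟪z j, z j - z i⟫) := by
    rw [two_mul]
    nth_rewrite 2 [hswap]
    unfold gEnergy
    rw [← Finset.sum_add_distrib]
    exact Finset.sum_congr rfl fun i _ => by rw [← Finset.sum_add_distrib]
  rw [this]
  refine Finset.sum_congr rfl fun i _ => Finset.sum_congr rfl fun j _ => ?_
  simp only [inner_sub_left, inner_sub_right]
  rw [real_inner_comm (z j) (z i)]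
  ring

lemma gEnergy_nonneg (z : V → F) : 0 ≤ gEnergy G z := by
  have h := gEnergy_eq G z
  have : 0 ≤ ∑ i, ∑ j ∈ G.neighborFinset i, ⟪z i - z j, z i - z j⟫ :=
    Finset.sum_nonneg fun i _ => Finset.sum_nonneg fun j _ => real_inner_self_nonneg
  linarith

lemma gEnergy_eq_zero (z : V → F) (h : gEnergy G z = 0) :
    ∀ i j, G.Adj i j → z i = z j := by
  intro i j hij
  have h2 : ∑ i, ∑ j ∈ G.neighborFinset i, ⟪z i - z j, z i - z j⟫ = 0 := by
    rw [← gEnergy_eq, h, mul_zero]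
  have hterm : ∀ i ∈ Finset.univ, ∀ j ∈ G.neighborFinset i, ⟪z i - z j, z i - z j⟫ = 0 := by
    have := Finset.sum_eq_zero_iff_of_nonneg (fun i _ =>
      Finset.sum_nonneg fun j _ => real_inner_self_nonneg) |>.mp h2
    intro i hi j hj
    exact (Finset.sum_eq_zero_iff_of_nonneg (fun j _ => real_inner_self_nonneg)).mp
      (this i hi) j hj
  have := hterm i (Finset.mem_univ i) j ((G.mem_neighborFinset i j).mpr hij)
  have := inner_self_eq_zero.mp this
  exact sub_eq_zero.mp this

lemma connected_const (hconn : G.Connected) (z : V → F)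
    (h : ∀ i j, G.Adj i j → z i = z j) : ∀ i j, z i = z j := by
  intro i j
  obtain ⟨w⟩ := hconn.preconnected i j
  induction w with
  | nil => rfl
  | cons hadj p ih => exact (h _ _ hadj).trans ih


noncomputable def Lmap : (V → F) →ₗ[ℝ] (V → F) where
  toFun z := fun i => ∑ j ∈ G.neighborFinset i, (z i - z j)
  map_add' x y := by
    funext i
    show ∑ j ∈ G.neighborFinset i, ((x + y) i - (x + y) j)
      = ∑ j ∈ G.neighborFinset i, (x i - x j) + ∑ j ∈ G.neighborFinset i, (y i - y j)
    rw [← Finset.sum_add_distrib]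
    exact Finset.sum_congr rfl fun j _ => by simp only [Pi.add_apply]; abel
  map_smul' c x := by
    funext i
    show ∑ j ∈ G.neighborFinset i, ((c • x) i - (c • x) j)
      = c • ∑ j ∈ G.neighborFinset i, (x i - x j)
    rw [Finset.smul_sum]
    exact Finset.sum_congr rfl fun j _ => by simp only [Pi.smul_apply, smul_sub]

noncomputable def sumMap : (V → F) →ₗ[ℝ] F where
  toFun z := ∑ i, z i
  map_add' x y := Finset.sum_add_distrib
  map_smul' c x := by simp [Finset.smul_sum]

lemma zero_sum_const_eq_zero (z : V → F) (hsum : ∑ i, z i = 0)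
    (hconst : ∀ i j, z i = z j) : z = 0 := by
  funext i
  have h1 : ∑ j, z j = (Fintype.card V) • z i := by
    rw [Finset.sum_congr rfl fun j _ => hconst j i]
    simp [Finset.card_univ]
  rw [hsum] at h1
  have h2 : ((Fintype.card V : ℝ)) • z i = 0 := by
    rw [Nat.cast_smul_eq_nsmul]; exact h1.symm
  rcases smul_eq_zero.mp h2 with h | h
  · exact absurd (Nat.cast_eq_zero.mp h) Fintype.card_ne_zero
  · simpa using h

lemma gEnergy_eq_inner_Lmap (z : V → F) :
    gEnergy G z = ∑ i, ⟪z i, Lmap G z i⟫ := by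
  refine Finset.sum_congr rfl fun i _ => ?_
  rw [show Lmap G z i = ∑ j ∈ G.neighborFinset i, (z i - z j) from rfl, inner_sum]

lemma Lmap_ker_sub (hconn : G.Connected) (z : V → F) (hsum : ∑ i, z i = 0)
    (hz : Lmap G z = 0) : z = 0 := by
  have hg : gEnergy G z = 0 := by
    rw [gEnergy_eq_inner_Lmap, hz]
    simp
  exact zero_sum_const_eq_zero z hsum
    (connected_const G hconn z (gEnergy_eq_zero G z hg))

lemma sum_Lmap (z : V → F) : ∑ i, Lmap G z i = 0 := by
  have := nbr_sum_zero G z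
  have h : ∑ i, Lmap G z i = - ∑ i, ∑ j ∈ G.neighborFinset i, (z j - z i) := by
    rw [← Finset.sum_neg_distrib]
    refine Finset.sum_congr rfl fun i _ => ?_
    rw [show Lmap G z i = ∑ j ∈ G.neighborFinset i, (z i - z j) from rfl,
      ← Finset.sum_neg_distrib]
    exact Finset.sum_congr rfl fun j _ => (neg_sub _ _).symm
  rw [h, this, neg_zero]

lemma exists_equilibrium (hconn : G.Connected) (w : V → F) (hw : ∑ i, w i = 0) :
    ∃ y : V → F, (∑ i, y i = 0) ∧ ∀ i, ∑ j ∈ G.neighborFinset i, (y j - y i) = w i := by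
  set S := LinearMap.ker (sumMap (V := V))
  have hmaps : ∀ z ∈ S, Lmap G z ∈ S := fun z _ => by
    simpa [S, LinearMap.mem_ker, sumMap] using sum_Lmap G z
  set Lres := (Lmap G).restrict hmaps with hLres
  have hinj : Function.Injective Lres := by
    intro a b hab
    have h0 : Lmap G ((a : V → F) - b) = 0 := by
      rw [map_sub, sub_eq_zero]
      exact congrArg Subtype.val hab
    have hsum : ∑ i, ((a : V → F) - b) i = 0 := by
      have ha := a.2; have hb := b.2
      simp only [S, LinearMap.mem_ker, sumMap, LinearMap.coe_mk, AddHom.coe_mk] at ha hb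
      simp [Pi.sub_apply, Finset.sum_sub_distrib, ha, hb]
    have := Lmap_ker_sub G hconn _ hsum h0
    exact Subtype.ext (sub_eq_zero.mp this)
  have hsurj : Function.Surjective Lres := LinearMap.injective_iff_surjective.mp hinj
  have hwS : (-w) ∈ S := by simp [S, LinearMap.mem_ker, sumMap, Finset.sum_neg_distrib, hw]
  obtain ⟨y, hy⟩ := hsurj ⟨-w, hwS⟩
  refine ⟨(y : V → F), ?_, fun i => ?_⟩
  · have h := y.2
    rw [LinearMap.mem_ker] at h
    exact h
  · have h1 : Lmap G (y : V → F) = -w := congrArg Subtype.val hy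
    have h2 : Lmap G (y : V → F) i = -w i := by rw [h1]; rfl
    have h3 : ∑ j ∈ G.neighborFinset i, ((y : V → F) j - (y : V → F) i)
        = - Lmap G (y : V → F) i := by
      rw [show Lmap G (y:V→F) i = ∑ j ∈ G.neighborFinset i, ((y:V→F) i - (y:V→F) j) from rfl,
        ← Finset.sum_neg_distrib]
      exact Finset.sum_congr rfl fun j _ => (neg_sub _ _).symm
    rw [h3, h2, neg_neg]


noncomputable def Nsq (z : V → F) : ℝ := ∑ i, ⟪z i, z i⟫

lemma Nsq_nonneg (z : V → F) : 0 ≤ Nsq z :=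
  Finset.sum_nonneg fun i _ => real_inner_self_nonneg

lemma Nsq_eq_zero (z : V → F) (h : Nsq z = 0) : z = 0 := by
  funext i
  have := (Finset.sum_eq_zero_iff_of_nonneg
    (fun i _ => real_inner_self_nonneg)).mp h i (Finset.mem_univ i)
  simpa using inner_self_eq_zero.mp this

lemma Nsq_smul (c : ℝ) (z : V → F) : Nsq (c • z) = c ^ 2 * Nsq z := by
  unfold Nsq
  rw [Finset.mul_sum]
  refine Finset.sum_congr rfl fun i _ => ?_
  simp only [Pi.smul_apply, real_inner_smul_left, real_inner_smul_right]
  ring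

lemma gEnergy_smul (c : ℝ) (z : V → F) : gEnergy G (c • z) = c ^ 2 * gEnergy G z := by
  unfold gEnergy
  rw [Finset.mul_sum]
  refine Finset.sum_congr rfl fun i _ => ?_
  rw [Finset.mul_sum]
  refine Finset.sum_congr rfl fun j _ => ?_
  simp only [Pi.smul_apply, ← smul_sub, real_inner_smul_left, real_inner_smul_right]
  ring

lemma Nsq_continuous : Continuous (Nsq (V := V)) := by
  unfold Nsq
  exact continuous_finset_sum _ fun i _ =>
    (continuous_apply i).inner (continuous_apply i)

lemma gEnergy_continuous : Continuous (gEnergy G) := by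
  unfold gEnergy
  exact continuous_finset_sum _ fun i _ => continuous_finset_sum _ fun j _ =>
    (continuous_apply i).inner ((continuous_apply i).sub (continuous_apply j))

lemma spectral_gap (hconn : G.Connected) :
    ∃ lam > (0:ℝ), ∀ z : V → F, ∑ i, z i = 0 → lam * Nsq z ≤ gEnergy G z := by
  classical
  set K : Set (V → F) := {z | (∑ i, z i = 0) ∧ Nsq z = 1} with hK
  by_cases hne : K.Nonempty
  · have hclosed : IsClosed K := by
      have h1 : IsClosed {z : V → F | ∑ i, z i = 0} :=
        isClosed_eq (continuous_finset_sum _ fun i _ => continuous_apply i) continuous_const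
      have h2 : IsClosed {z : V → F | Nsq z = 1} :=
        isClosed_eq Nsq_continuous continuous_const
      exact h1.inter h2
    have hbdd : K ⊆ Metric.closedBall 0 1 := by
      intro z hz
      rw [Metric.mem_closedBall, dist_zero_right]
      rw [pi_norm_le_iff_of_nonneg zero_le_one]
      intro i
      have h1 : ⟪z i, z i⟫ ≤ 1 := by
        rw [← hz.2]
        exact Finset.single_le_sum (f := fun j => ⟪z j, z j⟫)
          (fun j _ => real_inner_self_nonneg) (Finset.mem_univ i)
      rw [real_inner_self_eq_norm_sq] at h1
      nlinarith [norm_nonneg (z i)]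
    have hcompact : IsCompact K :=
      (isCompact_closedBall (0 : V → F) 1).of_isClosed_subset hclosed hbdd
    obtain ⟨z₀, hz₀K, hz₀min⟩ := hcompact.exists_isMinOn hne (gEnergy_continuous G).continuousOn
    refine ⟨gEnergy G z₀, ?_, ?_⟩
    · rcases lt_or_eq_of_le (gEnergy_nonneg G z₀) with h | h
      · exact h
      · exfalso
        have hz0 : z₀ = 0 := zero_sum_const_eq_zero z₀ hz₀K.1
          (connected_const G hconn z₀ (gEnergy_eq_zero G z₀ h.symm))
        have := hz₀K.2
        rw [hz0] at this
        simp [Nsq] at this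
    · intro z hzsum
      by_cases hz0 : Nsq z = 0
      · have hz : z = 0 := Nsq_eq_zero z hz0
        simp [hz, Nsq, gEnergy]
      · have hNpos : 0 < Nsq z := lt_of_le_of_ne (Nsq_nonneg z) (Ne.symm hz0)
        set a : ℝ := Real.sqrt (Nsq z) with ha
        have hapos : 0 < a := Real.sqrt_pos.mpr hNpos
        have ha2 : a ^ 2 = Nsq z := Real.sq_sqrt (le_of_lt hNpos)
        set w : V → F := a⁻¹ • z with hw
        have hwK : w ∈ K := by
          constructor
          · simp only [hw, Pi.smul_apply, ← Finset.smul_sum, hzsum, smul_zero]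
          · rw [hw, Nsq_smul, ← ha2]
            field_simp
        have hle : gEnergy G z₀ ≤ gEnergy G w := hz₀min hwK
        rw [hw, gEnergy_smul] at hle
        have h2 : a ^ 2 * gEnergy G z₀ ≤ gEnergy G z := by
          have := mul_le_mul_of_nonneg_left hle (le_of_lt (pow_pos hapos 2))
          calc a ^ 2 * gEnergy G z₀ ≤ a ^ 2 * (a⁻¹ ^ 2 * gEnergy G z) := this
            _ = gEnergy G z := by field_simp
        rw [ha2] at h2
        linarith
  · refine ⟨1, one_pos, fun z hzsum => ?_⟩
    by_cases hz0 : Nsq z = 0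
    · have hz : z = 0 := Nsq_eq_zero z hz0
      simp [hz, Nsq, gEnergy]
    · exfalso
      apply hne
      have hNpos : 0 < Nsq z := lt_of_le_of_ne (Nsq_nonneg z) (Ne.symm hz0)
      have hapos : 0 < Real.sqrt (Nsq z) := Real.sqrt_pos.mpr hNpos
      refine ⟨(Real.sqrt (Nsq z))⁻¹ • z, ?_, ?_⟩
      · simp only [Pi.smul_apply, ← Finset.smul_sum, hzsum, smul_zero]
      · rw [Nsq_smul, ← Real.sq_sqrt (le_of_lt hNpos)]
        field_simp
        rw [Real.sqrt_sq hapos.le]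


end helpers

lemma inner_pair_term {ι : Type*} (a b : EuclideanSpace ℝ (Fin 3))
    (s : Finset ι) (f : ι → EuclideanSpace ℝ (Fin 3)) :
    ⟪a, (∑ j ∈ s, (f j - a)) - b⟫ + ⟪(∑ j ∈ s, (f j - a)) - b, a⟫
      = 2 * ((- ∑ j ∈ s, ⟪a, a - f j⟫) - ⟪a, b⟫) := by
  simp only [inner_sub_left, inner_sub_right, sum_inner, inner_sum, Finset.sum_sub_distrib]
  rw [Finset.sum_congr rfl (fun j (_ : j ∈ s) => real_inner_comm (f j) a), real_inner_comm b a]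
  ring

lemma tendsto_of_decay (lam : ℝ) (hlam : 0 < lam) (Φ Φd B : ℝ → ℝ)
    (hΦ0 : ∀ s, 0 ≤ Φ s)
    (hderiv : ∀ s, 0 ≤ s → HasDerivAt Φ (Φd s) s)
    (hbd : ∀ s, 0 ≤ s → Φd s ≤ -2*lam*Φ s + 2*Real.sqrt (Φ s)*B s)
    (hB : Tendsto B atTop (nhds 0)) :
    Tendsto Φ atTop (nhds 0) := by
  have key : ∀ ε : ℝ, 0 < ε → ∃ S₁, ∀ s ≥ S₁, Φ s ≤ ε := by
    intro ε hε
    set e := ε/4 with he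
    have hepos : 0 < e := by positivity
    have hsq : 0 < lam * Real.sqrt e := by positivity
    obtain ⟨S₀', hS₀'⟩ := Metric.tendsto_atTop.mp hB _ hsq
    set S₀ := max S₀' 0 with hS0def
    have hS₀0 : (0:ℝ) ≤ S₀ := le_max_right _ _
    have hBle : ∀ s, S₀ ≤ s → B s ≤ lam * Real.sqrt e := by
      intro s hs
      have h := hS₀' s (le_trans (le_max_left _ _) hs)
      rw [Real.dist_eq, sub_zero] at h
      exact (le_abs_self _).trans (le_of_lt h)
    have hsqrte : Real.sqrt e * Real.sqrt e = e := Real.mul_self_sqrt hepos.le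
    -- decay estimate in the bad region
    have hdecay : ∀ s, S₀ ≤ s → 4*e ≤ Φ s → Φd s ≤ -(4*lam*e) := by
      intro s hs h4
      have h0s : (0:ℝ) ≤ s := le_trans hS₀0 hs
      have hb := hbd s h0s
      have hBs := hBle s hs
      have hsqrtΦ : Real.sqrt (Φ s) * Real.sqrt (Φ s) = Φ s := Real.mul_self_sqrt (hΦ0 s)
      have hsn : 0 ≤ Real.sqrt (Φ s) := Real.sqrt_nonneg _
      have t2 : 4 * (Real.sqrt (Φ s) * Real.sqrt e) ≤ 2 * Φ s := by
        nlinarith [sq_nonneg (Real.sqrt (Φ s) - 2*Real.sqrt e)]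
      have t1 : 2*Real.sqrt (Φ s) * B s ≤ 2*Real.sqrt (Φ s) * (lam * Real.sqrt e) := by
        nlinarith
      nlinarith [mul_le_mul_of_nonneg_left t2 hlam.le]
    -- (a) eventually Φ dips below 4e
    have ha : ∃ s₁, S₀ ≤ s₁ ∧ Φ s₁ ≤ 4*e := by
      by_contra hcon
      push_neg at hcon
      have hcon' : ∀ s, S₀ ≤ s → 4*e ≤ Φ s := fun s hs => (hcon s hs).le
      obtain ⟨q, hq0, hqmul⟩ : ∃ q, 0 ≤ q ∧ q * (4*lam*e) = Φ S₀ :=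
        ⟨Φ S₀ / (4*lam*e), div_nonneg (hΦ0 S₀) (by positivity),
          div_mul_cancel₀ _ (by positivity)⟩
      set X := S₀ + q + 1 with hX
      have hSX : S₀ ≤ X := by rw [hX]; linarith
      set ψ : ℝ → ℝ := fun s => Φ s + s * (4*lam*e) with hψ
      have hψd : ∀ x, 0 ≤ x → HasDerivAt ψ (Φd x + 4*lam*e) x := fun x hx =>
        (hderiv x hx).add (hasDerivAt_mul_const _)
      have hanti : AntitoneOn ψ (Set.Icc S₀ X) := by
        apply antitoneOn_of_deriv_nonpos (convex_Icc _ _)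
        · exact fun x hx => ((hψd x (le_trans hS₀0 hx.1)).continuousAt).continuousWithinAt
        · intro x hx
          rw [interior_Icc] at hx
          exact ((hψd x (le_trans hS₀0 hx.1.le)).differentiableAt).differentiableWithinAt
        · intro x hx
          rw [interior_Icc] at hx
          rw [(hψd x (le_trans hS₀0 hx.1.le)).deriv]
          have := hdecay x hx.1.le (hcon' x hx.1.le)
          linarith
      have hres := hanti (Set.left_mem_Icc.mpr hSX) (Set.right_mem_Icc.mpr hSX) hSX
      simp only [hψ] at hres
      rw [hX] at hres
      nlinarith [hΦ0 (S₀ + q + 1), hlam, hepos]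
    obtain ⟨s₁, hs₁S₀, hs₁⟩ := ha
    refine ⟨s₁, fun s₂ hs₂ => ?_⟩
    have h4e : 4*e = ε := by rw [he]; ring
    rw [← h4e]
    by_contra hcon
    push_neg at hcon
    set A : Set ℝ := {x | x ∈ Set.Icc s₁ s₂ ∧ Φ x ≤ 4*e} with hA
    have hs₁A : s₁ ∈ A := ⟨Set.left_mem_Icc.mpr hs₂, hs₁⟩
    have hAne : A.Nonempty := ⟨s₁, hs₁A⟩
    have hAbdd : BddAbove A := ⟨s₂, fun x hx => hx.1.2⟩
    set u := sSup A with hu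
    have hus₁ : s₁ ≤ u := le_csSup hAbdd hs₁A
    have hus₂ : u ≤ s₂ := csSup_le hAne (fun x hx => hx.1.2)
    have hu0 : (0:ℝ) ≤ u := le_trans (le_trans hS₀0 hs₁S₀) hus₁
    have hΦu : Φ u ≤ 4*e := by
      by_contra hgt
      push_neg at hgt
      have hc : ContinuousAt Φ u := (hderiv u hu0).continuousAt
      have hev : ∀ᶠ x in nhds u, 4*e < Φ x := hc.eventually (eventually_gt_nhds hgt)
      obtain ⟨d, hd, hdp⟩ := Metric.eventually_nhds_iff.mp hev
      obtain ⟨a, haA, halt⟩ := exists_lt_of_lt_csSup hAne (show u - d < u by linarith)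
      have hau : a ≤ u := le_csSup hAbdd haA
      have : dist a u < d := by rw [Real.dist_eq, abs_of_nonpos (by linarith)]; linarith
      exact absurd (hdp this) (not_lt.mpr haA.2)
    have hune : u < s₂ := by
      rcases lt_or_eq_of_le hus₂ with h | h
      · exact h
      · exfalso; rw [h] at hΦu; linarith
    have hIoc : ∀ x, u < x → x ≤ s₂ → 4*e ≤ Φ x := by
      intro x hux hxs₂
      by_contra hle
      push_neg at hle
      have hxA : x ∈ A := ⟨⟨le_trans hus₁ hux.le, hxs₂⟩, hle.le⟩
      exact absurd (le_csSup hAbdd hxA) (not_le.mpr hux)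
    have hanti : AntitoneOn Φ (Set.Icc u s₂) := by
      apply antitoneOn_of_deriv_nonpos (convex_Icc _ _)
      · exact fun x hx => ((hderiv x (le_trans hu0 hx.1)).continuousAt).continuousWithinAt
      · intro x hx
        rw [interior_Icc] at hx
        exact ((hderiv x (le_trans hu0 hx.1.le)).differentiableAt).differentiableWithinAt
      · intro x hx
        rw [interior_Icc] at hx
        rw [(hderiv x (le_trans hu0 hx.1.le)).deriv]
        have hxS₀ : S₀ ≤ x := le_trans (le_trans hs₁S₀ hus₁) hx.1.le
        have := hdecay x hxS₀ (hIoc x hx.1 hx.2.le)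
        nlinarith
    have := hanti (Set.left_mem_Icc.mpr hune.le) (Set.right_mem_Icc.mpr hune.le) hune.le
    linarith
  rw [Metric.tendsto_atTop]
  intro ε hε
  obtain ⟨S₁, hS₁⟩ := key (ε/2) (by linarith)
  refine ⟨S₁, fun s hs => ?_⟩
  rw [Real.dist_eq, sub_zero, abs_of_nonneg (hΦ0 s)]
  linarith [hS₁ s hs]

/-- (Convergence of the coupled translation estimation.) Let `G` be a connected simple
graph on a finite nonempty vertex set `V`, and let `δ : [0,∞) → (V → ℝ³)` be a
continuous, minimally consistent input (`Σ_i δ_i(s) = 0`) converging to `δlimit`. If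
`t : [0,∞) → (V → ℝ³)` satisfies the translation dynamics
`ṫ_i(s) = Σ_{j∼i} (t_j(s) − t_i(s)) − δ_i(s)`, then `t(s)` converges as `s → ∞` to an
equilibrium `t_eq` with `Σ_{j∼i} (t_eq(j) − t_eq(i)) = δlimit(i)` for every `i`. -/
theorem coupled_translation_convergence {V : Type*} [Fintype V] [Nonempty V]
    (G : SimpleGraph V) [DecidableRel G.Adj] (hconn : G.Connected)
    (δ : ℝ → V → EuclideanSpace ℝ (Fin 3))
    (hδcont : ContinuousOn δ (Set.Ici 0))
    (hδmin : ∀ s, 0 ≤ s → ∑ i, δ s i = 0)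
    (δlimit : V → EuclideanSpace ℝ (Fin 3))
    (hδlim : Tendsto δ atTop (nhds δlimit))
    (t : ℝ → V → EuclideanSpace ℝ (Fin 3))
    (hdyn : ∀ i, ∀ s, 0 ≤ s → HasDerivAt (fun u => t u i)
      ((∑ j ∈ G.neighborFinset i, (t s j - t s i)) - δ s i) s) :
    ∃ teq : V → EuclideanSpace ℝ (Fin 3),
      Tendsto t atTop (nhds teq) ∧
      ∀ i, ∑ j ∈ G.neighborFinset i, (teq j - teq i) = δlimit i := by
  classical
  obtain ⟨lam, hlam, hgap⟩ := spectral_gap G hconn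
  -- the limit input has zero sum
  have hδsum0 : ∑ i, δlimit i = 0 := by
    have h1 : Tendsto (fun s => ∑ i, δ s i) atTop (nhds (∑ i, δlimit i)) :=
      tendsto_finset_sum _ fun i _ => tendsto_pi_nhds.mp hδlim i
    have h2 : (fun s => ∑ i, δ s i) =ᶠ[atTop] (fun _ => (0 : EuclideanSpace ℝ (Fin 3))) :=
      eventually_atTop.mpr ⟨0, fun s hs => hδmin s hs⟩
    exact tendsto_nhds_unique (h1.congr' h2) tendsto_const_nhds
  -- solve for the equilibrium shape
  obtain ⟨y, hysum, hy⟩ := exists_equilibrium G hconn δlimit hδsum0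
  -- adjust by a constant so that the total sum matches
  set n := Fintype.card V with hn
  have hnpos : 0 < n := Fintype.card_pos
  set c : EuclideanSpace ℝ (Fin 3) := (n : ℝ)⁻¹ • (∑ i, t 0 i) with hc
  set teq : V → EuclideanSpace ℝ (Fin 3) := fun i => y i + c with hteq
  have heq : ∀ i, ∑ j ∈ G.neighborFinset i, (teq j - teq i) = δlimit i := by
    intro i
    rw [← hy i]
    exact Finset.sum_congr rfl fun j _ => by simp [hteq]
  have hteqsum : ∑ i, teq i = ∑ i, t 0 i := by
    rw [hteq]
    rw [Finset.sum_add_distrib, hysum, zero_add, Finset.sum_const, Finset.card_univ, ← hn]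
    rw [hc, ← Nat.cast_smul_eq_nsmul ℝ, smul_smul,
      mul_inv_cancel₀ (Nat.cast_ne_zero.mpr hnpos.ne'), one_smul]
  -- the total sum is conserved
  have hT : ∀ s, 0 ≤ s → ∑ i, t s i = ∑ i, t 0 i := by
    intro s hs
    have hcont : ContinuousOn (fun u => ∑ i, t u i) (Set.Icc 0 s) := fun x hx =>
      ((HasDerivAt.fun_sum (fun i _ => hdyn i x hx.1)).continuousAt).continuousWithinAt
    have hder : ∀ x ∈ Set.Ico 0 s, HasDerivWithinAt (fun u => ∑ i, t u i) 0 (Set.Ici x) x := by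
      intro x hx
      have hD := HasDerivAt.fun_sum (u := Finset.univ) (fun i _ => hdyn i x hx.1)
      have hval : ∑ i, ((∑ j ∈ G.neighborFinset i, (t x j - t x i)) - δ x i) = 0 := by
        rw [Finset.sum_sub_distrib, nbr_sum_zero G (t x), hδmin x hx.1, sub_zero]
      rw [hval] at hD
      exact hD.hasDerivWithinAt
    exact constant_of_has_deriv_right_zero hcont hder s (Set.mem_Icc.mpr ⟨hs, le_refl s⟩)
  set z : ℝ → V → EuclideanSpace ℝ (Fin 3) := fun s i => t s i - teq i with hzdef
  have hzsum : ∀ s, 0 ≤ s → ∑ i, z s i = 0 := by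
    intro s hs
    simp only [hzdef]
    rw [Finset.sum_sub_distrib, hT s hs, hteqsum]
    exact sub_self _
  have hzD : ∀ i s, 0 ≤ s → HasDerivAt (fun u => z u i)
      ((∑ j ∈ G.neighborFinset i, (z s j - z s i)) - (δ s i - δlimit i)) s := by
    intro i s hs
    have h := (hdyn i s hs).sub_const (teq i)
    have hval : (∑ j ∈ G.neighborFinset i, (t s j - t s i)) - δ s i
        = (∑ j ∈ G.neighborFinset i, (z s j - z s i)) - (δ s i - δlimit i) := by
      have hsplit : ∑ j ∈ G.neighborFinset i, (z s j - z s i)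
          = (∑ j ∈ G.neighborFinset i, (t s j - t s i))
            - (∑ j ∈ G.neighborFinset i, (teq j - teq i)) := by
        rw [← Finset.sum_sub_distrib]
        refine Finset.sum_congr rfl fun j _ => ?_
        simp only [hzdef]
        abel
      rw [hsplit, heq i]
      abel
    rw [← hval]
    exact h
  set B : ℝ → ℝ := fun s => ∑ i, ‖δ s i - δlimit i‖ with hBdef
  set Φ : ℝ → ℝ := fun s => Nsq (z s) with hΦdef
  set Φd : ℝ → ℝ := fun s =>
    2 * (-(gEnergy G (z s)) - ∑ i, ⟪z s i, δ s i - δlimit i⟫) with hΦddef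
  have hΦ0 : ∀ s, 0 ≤ Φ s := fun s => Nsq_nonneg (z s)
  have hΦderiv : ∀ s, 0 ≤ s → HasDerivAt Φ (Φd s) s := by
    intro s hs
    have hD := HasDerivAt.fun_sum (u := Finset.univ) (fun i _ =>
      HasDerivAt.inner ℝ (hzD i s hs) (hzD i s hs))
    have hval : (∑ i, (⟪z s i,
          (∑ j ∈ G.neighborFinset i, (z s j - z s i)) - (δ s i - δlimit i)⟫
        + ⟪(∑ j ∈ G.neighborFinset i, (z s j - z s i)) - (δ s i - δlimit i), z s i⟫))
        = Φd s := by
      have h2 : ∀ i : V, ⟪z s i,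
            (∑ j ∈ G.neighborFinset i, (z s j - z s i)) - (δ s i - δlimit i)⟫
          + ⟪(∑ j ∈ G.neighborFinset i, (z s j - z s i)) - (δ s i - δlimit i), z s i⟫
          = 2 * ((- ∑ j ∈ G.neighborFinset i, ⟪z s i, z s i - z s j⟫)
              - ⟪z s i, δ s i - δlimit i⟫) := by
        intro i
        exact inner_pair_term (z s i) (δ s i - δlimit i) (G.neighborFinset i) (z s)
      rw [Finset.sum_congr rfl (fun i _ => h2 i), ← Finset.mul_sum]
      rw [hΦddef]
      congr 1
      rw [Finset.sum_sub_distrib, Finset.sum_neg_distrib]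
      rfl
    rw [hval] at hD
    exact hD
  have hnormle : ∀ s i, ‖z s i‖ ≤ Real.sqrt (Φ s) := by
    intro s i
    have h3 : ⟪z s i, z s i⟫ ≤ Φ s := Finset.single_le_sum
      (f := fun j => ⟪z s j, z s j⟫) (fun j _ => real_inner_self_nonneg)
      (Finset.mem_univ i)
    have h4 : ‖z s i‖ = Real.sqrt ⟪z s i, z s i⟫ := by
      rw [real_inner_self_eq_norm_sq, Real.sqrt_sq (norm_nonneg _)]
    rw [h4]
    exact Real.sqrt_le_sqrt h3
  have hΦbd : ∀ s, 0 ≤ s → Φd s ≤ -2*lam*Φ s + 2*Real.sqrt (Φ s) * B s := by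
    intro s hs
    have hg := hgap (z s) (hzsum s hs)
    have h1 : ∀ i : V, -⟪z s i, δ s i - δlimit i⟫
        ≤ Real.sqrt (Φ s) * ‖δ s i - δlimit i‖ := by
      intro i
      have ha := abs_real_inner_le_norm (z s i) (δ s i - δlimit i)
      have h5 : ‖z s i‖ * ‖δ s i - δlimit i‖
          ≤ Real.sqrt (Φ s) * ‖δ s i - δlimit i‖ :=
        mul_le_mul_of_nonneg_right (hnormle s i) (norm_nonneg _)
      nlinarith [neg_abs_le (⟪z s i, δ s i - δlimit i⟫ : ℝ)]
    have hinner : -∑ i, ⟪z s i, δ s i - δlimit i⟫ ≤ Real.sqrt (Φ s) * B s := by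
      rw [← Finset.sum_neg_distrib]
      calc ∑ i, -⟪z s i, δ s i - δlimit i⟫
          ≤ ∑ i, Real.sqrt (Φ s) * ‖δ s i - δlimit i‖ :=
            Finset.sum_le_sum fun i _ => h1 i
        _ = Real.sqrt (Φ s) * B s := by rw [hBdef, Finset.mul_sum]
    have hΦN : Φ s = Nsq (z s) := rfl
    rw [hΦddef]
    simp only
    rw [hΦN] at *
    linarith
  have hBlim : Tendsto B atTop (nhds 0) := by
    have h1 : ∀ i : V, Tendsto (fun s => ‖δ s i - δlimit i‖) atTop (nhds 0) := by
      intro i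
      have h2 := (tendsto_pi_nhds.mp hδlim i).sub
        (tendsto_const_nhds (x := δlimit i) (f := atTop))
      simpa using h2.norm
    have h3 := tendsto_finset_sum Finset.univ (fun i (_ : i ∈ Finset.univ) => h1 i)
    simpa [hBdef] using h3
  have hΦlim : Tendsto Φ atTop (nhds 0) :=
    tendsto_of_decay lam hlam Φ Φd B hΦ0 hΦderiv hΦbd hBlim
  refine ⟨teq, ?_, heq⟩
  rw [tendsto_pi_nhds]
  intro i
  rw [tendsto_iff_norm_sub_tendsto_zero]
  have hsq : Tendsto (fun s => Real.sqrt (Φ s)) atTop (nhds 0) := by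
    have h := (Real.continuous_sqrt.tendsto 0).comp hΦlim
    simpa [Function.comp_def] using h
  exact squeeze_zero (fun s => norm_nonneg _) (fun s => hnormle s i) hsq
end
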